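/- arXiv:1308.0576 — 2 statements merged into one kernel-verified Lean document; each statement's English description precedes it below -/
import Mathlib

section
/- Let P be a Markov probability measure on path space. Then for any t ∈ [0,1] and events A ∈ 𝒜_{[0,t]}, B ∈ 𝒜_{[t,1]}: P(A ∩ B | X_0, X_t, X_1) = P(A | X_0, X_t) · P(B | X_0, X_t, X_1), P-a.s. Consequently, P(A ∩ B | σ(X_0, X_t, X_1)) = P(A | σ(X_0, X_t, X_1)) P(B | σ(X_0, X_t, X_1)) a.s., i.e., the conditional laws of P given (X_0, X_1) are Markov in the sense that past and future given X_t are conditionally independent under the pinned conditioning. -/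
open MeasureTheory

noncomputable section

variable {Ω 𝒳 : Type*}

/-- σ-algebra generated by the canonical process on the time window `[s,u]`. -/
def window [MeasurableSpace 𝒳] (X : ℝ → Ω → 𝒳) (s u : ℝ) : MeasurableSpace Ω :=
  ⨆ r ∈ Set.Icc s u, MeasurableSpace.comap (X r) inferInstance

/-- σ-algebra generated by the position at time `t`. -/
def at1 [MeasurableSpace 𝒳] (X : ℝ → Ω → 𝒳) (t : ℝ) : MeasurableSpace Ω :=
  MeasurableSpace.comap (X t) inferInstance

/-- σ-algebra generated by the pair of positions at times `s` and `u`. -/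
def at2 [MeasurableSpace 𝒳] (X : ℝ → Ω → 𝒳) (s u : ℝ) : MeasurableSpace Ω :=
  MeasurableSpace.comap (fun ω => (X s ω, X u ω)) inferInstance

/-- Indicator function of an event, real-valued. -/
def ind (A : Set Ω) : Ω → ℝ := A.indicator (fun _ => 1)

/-- The two-sided (symmetric) Markov property: for every time `t ∈ [0,1]`, past and future
events are conditionally independent given the present position `X t`. -/
def IsMarkov [MeasurableSpace Ω] [MeasurableSpace 𝒳]
    (X : ℝ → Ω → 𝒳) (P : Measure Ω) : Prop :=
  ∀ t ∈ Set.Icc (0:ℝ) 1, ∀ A B : Set Ω,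
    MeasurableSet[window X 0 t] A → MeasurableSet[window X t 1] B →
    P[ind (A ∩ B) | at1 X t] =ᵐ[P] P[ind A | at1 X t] * P[ind B | at1 X t]

/-- The reciprocal property: for all `0 ≤ s ≤ u ≤ 1`, the events inside `[s,u]` and those
outside are conditionally independent given the pair `(X s, X u)`. -/
def IsReciprocal [MeasurableSpace Ω] [MeasurableSpace 𝒳]
    (X : ℝ → Ω → 𝒳) (P : Measure Ω) : Prop :=
  ∀ s u : ℝ, 0 ≤ s → s ≤ u → u ≤ 1 → ∀ A B C : Set Ω,
    MeasurableSet[window X 0 s] A → MeasurableSet[window X s u] B →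
    MeasurableSet[window X u 1] C →
    P[ind (A ∩ B ∩ C) | at2 X s u] =ᵐ[P]
      P[ind (A ∩ C) | at2 X s u] * P[ind B | at2 X s u]

/-- σ-algebra generated by the positions at times `0`, `t` and `1`. -/
def at3 [MeasurableSpace 𝒳] (X : ℝ → Ω → 𝒳) (t : ℝ) : MeasurableSpace Ω :=
  MeasurableSpace.comap (fun ω => (X 0 ω, X t ω, X 1 ω)) inferInstance

section BridgeAux
set_option linter.unusedSectionVars false

variable [mΩ : MeasurableSpace Ω] [MeasurableSpace 𝒳]

lemma meas_mono {m m' : MeasurableSpace Ω} (h : m ≤ m') {s : Set Ω}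
    (hs : MeasurableSet[m] s) : MeasurableSet[m'] s := h _ hs

lemma window_le {X : ℝ → Ω → 𝒳} (hX : ∀ r, Measurable (X r)) (s u : ℝ) :
    window X s u ≤ mΩ :=
  iSup₂_le fun r _ => (hX r).comap_le

lemma at1_le_window {X : ℝ → Ω → 𝒳} {r s u : ℝ} (h : r ∈ Set.Icc s u) :
    at1 X r ≤ window X s u :=
  le_biSup (fun r => MeasurableSpace.comap (X r) inferInstance) h

lemma comap_le_comap_of_comp {α β γ : Type*} [MeasurableSpace β] [MeasurableSpace γ]
    {f : α → β} {g : α → γ} {h : γ → β} (hh : Measurable h) (hfg : f = h ∘ g) :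
    MeasurableSpace.comap f inferInstance ≤ MeasurableSpace.comap g inferInstance := by
  subst hfg
  rw [← MeasurableSpace.comap_comp]
  exact MeasurableSpace.comap_mono hh.comap_le

lemma at1_le_at2 {X : ℝ → Ω → 𝒳} {s u : ℝ} : at1 X u ≤ at2 X s u :=
  comap_le_comap_of_comp measurable_snd rfl

lemma at1_le_at2' {X : ℝ → Ω → 𝒳} {s u : ℝ} : at1 X s ≤ at2 X s u :=
  comap_le_comap_of_comp measurable_fst rfl

lemma at2_le_at3 {X : ℝ → Ω → 𝒳} {t : ℝ} : at2 X 0 t ≤ at3 X t :=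
  comap_le_comap_of_comp (measurable_fst.prodMk (measurable_fst.comp measurable_snd)) rfl

lemma at1_one_le_at3 {X : ℝ → Ω → 𝒳} {t : ℝ} : at1 X 1 ≤ at3 X t :=
  comap_le_comap_of_comp (measurable_snd.comp measurable_snd) rfl

lemma at2_le_sup {X : ℝ → Ω → 𝒳} {s u : ℝ} {m' : MeasurableSpace Ω}
    (hs : at1 X s ≤ m') (hu : at1 X u ≤ m') : at2 X s u ≤ m' := by
  have h1 : @Measurable Ω 𝒳 m' _ (X s) := Measurable.of_comap_le hs
  have h2 : @Measurable Ω 𝒳 m' _ (X u) := Measurable.of_comap_le hu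
  exact Measurable.comap_le (h1.prodMk h2)

lemma at3_le_sup {X : ℝ → Ω → 𝒳} {t : ℝ} {m' : MeasurableSpace Ω}
    (h0 : at1 X 0 ≤ m') (ht : at1 X t ≤ m') (h1 : at1 X 1 ≤ m') : at3 X t ≤ m' := by
  have g0 : @Measurable Ω 𝒳 m' _ (X 0) := Measurable.of_comap_le h0
  have gt' : @Measurable Ω 𝒳 m' _ (X t) := Measurable.of_comap_le ht
  have g1 : @Measurable Ω 𝒳 m' _ (X 1) := Measurable.of_comap_le h1
  exact Measurable.comap_le (g0.prodMk (gt'.prodMk g1))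

lemma at2_le_window' {X : ℝ → Ω → 𝒳} {t : ℝ} (ht0 : 0 ≤ t) :
    at2 X 0 t ≤ window X 0 t :=
  at2_le_sup (at1_le_window ⟨le_refl 0, ht0⟩) (at1_le_window ⟨ht0, le_refl t⟩)

lemma ind_norm_le (S : Set Ω) (ω : Ω) : ‖ind S ω‖ ≤ 1 := by
  by_cases h : ω ∈ S <;> simp [ind, Set.indicator_of_mem, Set.indicator_of_notMem, h]

lemma ind_mul (S : Set Ω) (g : Ω → ℝ) : ind S * g = S.indicator g := by
  funext ω
  by_cases h : ω ∈ S <;>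
    simp [ind, Set.indicator_of_mem, Set.indicator_of_notMem, h]

lemma ind_inter (S T : Set Ω) : ind (S ∩ T) = ind S * ind T := by
  funext ω
  by_cases hS : ω ∈ S <;> by_cases hT : ω ∈ T <;>
    simp [ind, Set.indicator_apply, Set.mem_inter_iff, hS, hT]

lemma ind_integrable {P : Measure Ω} [IsProbabilityMeasure P] {S : Set Ω}
    (hS : MeasurableSet S) : Integrable (ind S) P :=
  (integrable_const (1:ℝ)).indicator hS

lemma ind_stronglyMeasurable {m : MeasurableSpace Ω} {S : Set Ω}
    (hS : MeasurableSet[m] S) : StronglyMeasurable[m] (ind S) :=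
  stronglyMeasurable_const.indicator hS

lemma condexp_ind_bound (P : Measure Ω) [IsProbabilityMeasure P] (m : MeasurableSpace Ω)
    (S : Set Ω) : ∀ᵐ ω ∂P, ‖(P[ind S|m]) ω‖ ≤ 1 := by
  have h := ae_bdd_condExp_of_ae_bdd (μ := P) (m := m) (R := 1) (f := ind S)
    (Filter.Eventually.of_forall fun ω => by
      simpa [Real.norm_eq_abs] using ind_norm_le S ω)
  filter_upwards [h] with ω hω
  simpa [Real.norm_eq_abs] using hω

lemma integrable_bddae_mul {P : Measure Ω} {f g : Ω → ℝ} (hg : Integrable g P)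
    (hf : AEStronglyMeasurable f P) (hbdd : ∀ᵐ ω ∂P, ‖f ω‖ ≤ 1) :
    Integrable (f * g) P := by
  exact Integrable.bdd_mul hg hf hbdd

variable {X : ℝ → Ω → 𝒳} {P : Measure Ω} [IsProbabilityMeasure P] {t : ℝ}

lemma markov_integral_mul (hX : ∀ r, Measurable (X r)) (hP : IsMarkov X P)
    (ht : t ∈ Set.Icc (0:ℝ) 1) {V B' : Set Ω}
    (hV : MeasurableSet[window X 0 t] V) (hB' : MeasurableSet[window X t 1] B') :
    ∫ ω, (P[ind V|at1 X t]) ω * (P[ind B'|at1 X t]) ω ∂P = ∫ ω, ind (V ∩ B') ω ∂P := by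
  have hm1 : at1 X t ≤ mΩ := (hX t).comap_le
  have h := hP t ht V B' hV hB'
  have h1 : ∫ ω, (P[ind V|at1 X t]) ω * (P[ind B'|at1 X t]) ω ∂P
      = ∫ ω, (P[ind (V ∩ B')|at1 X t]) ω ∂P := (integral_congr_ae h).symm
  rw [h1, integral_condExp hm1]

lemma condexp_future_at2 (hX : ∀ r, Measurable (X r)) (hP : IsMarkov X P)
    (ht : t ∈ Set.Icc (0:ℝ) 1) {B' : Set Ω}
    (hB' : MeasurableSet[window X t 1] B') :
    P[ind B'|at2 X 0 t] =ᵐ[P] P[ind B'|at1 X t] := by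
  have hm1 : at1 X t ≤ mΩ := (hX t).comap_le
  have hm2 : at2 X 0 t ≤ mΩ := at2_le_sup (hX 0).comap_le (hX t).comap_le
  have hB'Ω : MeasurableSet B' := meas_mono (window_le hX t 1) hB'
  refine (ae_eq_condExp_of_forall_setIntegral_eq hm2 (ind_integrable hB'Ω)
    (fun s _ _ => integrable_condExp.integrableOn) (fun V hV _ => ?_)
    ((stronglyMeasurable_condExp.mono at1_le_at2).aestronglyMeasurable)).symm
  have hVΩ : MeasurableSet V := meas_mono hm2 hV
  have hVp : MeasurableSet[window X 0 t] V := meas_mono (at2_le_window' ht.1) hV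
  set k := P[ind B'|at1 X t] with hk
  have hint : Integrable (k * ind V) P :=
    integrable_bddae_mul (ind_integrable hVΩ)
      (stronglyMeasurable_condExp.mono hm1).aestronglyMeasurable
      (condexp_ind_bound P (at1 X t) B')
  have hpull : P[k * ind V|at1 X t] =ᵐ[P] k * P[ind V|at1 X t] :=
    condExp_mul_of_stronglyMeasurable_left stronglyMeasurable_condExp hint (ind_integrable hVΩ)
  calc ∫ ω in V, k ω ∂P = ∫ ω, (k * ind V) ω ∂P := by
        rw [mul_comm, ind_mul, integral_indicator hVΩ]
    _ = ∫ ω, (P[k * ind V|at1 X t]) ω ∂P := (integral_condExp hm1).symm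
    _ = ∫ ω, (k * P[ind V|at1 X t]) ω ∂P := integral_congr_ae hpull
    _ = ∫ ω, (P[ind V|at1 X t]) ω * k ω ∂P :=
        integral_congr_ae (Filter.Eventually.of_forall fun ω => mul_comm _ _)
    _ = ∫ ω, ind (V ∩ B') ω ∂P := markov_integral_mul hX hP ht hVp hB'
    _ = ∫ ω in V, ind B' ω ∂P := by rw [ind_inter, ind_mul, integral_indicator hVΩ]

lemma key_integral (hX : ∀ r, Measurable (X r)) (hP : IsMarkov X P)
    (ht : t ∈ Set.Icc (0:ℝ) 1) {A' B' : Set Ω}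
    (hA' : MeasurableSet[window X 0 t] A') (hB' : MeasurableSet[window X t 1] B') :
    ∫ ω, ((P[ind A'|at2 X 0 t]) * ind B') ω ∂P = ∫ ω, ind (A' ∩ B') ω ∂P := by
  have hm1 : at1 X t ≤ mΩ := (hX t).comap_le
  have hm2 : at2 X 0 t ≤ mΩ := at2_le_sup (hX 0).comap_le (hX t).comap_le
  have hA'Ω : MeasurableSet A' := meas_mono (window_le hX 0 t) hA'
  have hB'Ω : MeasurableSet B' := meas_mono (window_le hX t 1) hB'
  set g2 := P[ind A'|at2 X 0 t] with hg2
  set k := P[ind B'|at1 X t] with hk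
  have hkm2 : StronglyMeasurable[at2 X 0 t] k := stronglyMeasurable_condExp.mono at1_le_at2
  have hint1 : Integrable (g2 * ind B') P :=
    integrable_bddae_mul (ind_integrable hB'Ω)
      (stronglyMeasurable_condExp.mono hm2).aestronglyMeasurable (condexp_ind_bound P (at2 X 0 t) A')
  have hp1 : P[g2 * ind B'|at2 X 0 t] =ᵐ[P] g2 * P[ind B'|at2 X 0 t] :=
    condExp_mul_of_stronglyMeasurable_left stronglyMeasurable_condExp hint1 (ind_integrable hB'Ω)
  have hint2 : Integrable (k * ind A') P :=
    integrable_bddae_mul (ind_integrable hA'Ω)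
      (stronglyMeasurable_condExp.mono hm1).aestronglyMeasurable (condexp_ind_bound P (at1 X t) B')
  have hp2 : P[k * ind A'|at2 X 0 t] =ᵐ[P] k * g2 :=
    condExp_mul_of_stronglyMeasurable_left hkm2 hint2 (ind_integrable hA'Ω)
  have hp3 : P[k * ind A'|at1 X t] =ᵐ[P] k * P[ind A'|at1 X t] :=
    condExp_mul_of_stronglyMeasurable_left stronglyMeasurable_condExp hint2 (ind_integrable hA'Ω)
  calc ∫ ω, (g2 * ind B') ω ∂P
      = ∫ ω, (P[g2 * ind B'|at2 X 0 t]) ω ∂P := (integral_condExp hm2).symm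
    _ = ∫ ω, (g2 * P[ind B'|at2 X 0 t]) ω ∂P := integral_congr_ae hp1
    _ = ∫ ω, (k * g2) ω ∂P := by
        refine integral_congr_ae ?_
        filter_upwards [condexp_future_at2 hX hP ht hB'] with ω hω
        simp only [Pi.mul_apply]
        rw [hω, mul_comm]
    _ = ∫ ω, (P[k * ind A'|at2 X 0 t]) ω ∂P := (integral_congr_ae hp2).symm
    _ = ∫ ω, (k * ind A') ω ∂P := integral_condExp hm2
    _ = ∫ ω, (P[k * ind A'|at1 X t]) ω ∂P := (integral_condExp hm1).symm
    _ = ∫ ω, (P[ind A'|at1 X t]) ω * k ω ∂P := by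
        refine integral_congr_ae ?_
        filter_upwards [hp3] with ω hω
        rw [hω]; exact mul_comm _ _
    _ = ∫ ω, ind (A' ∩ B') ω ∂P := markov_integral_mul hX hP ht hA' hB'


lemma condexp_past_sup (hX : ∀ r, Measurable (X r)) (hP : IsMarkov X P)
    (ht : t ∈ Set.Icc (0:ℝ) 1) {A : Set Ω}
    (hA : MeasurableSet[window X 0 t] A) :
    P[ind A|at2 X 0 t ⊔ window X t 1] =ᵐ[P] P[ind A|at2 X 0 t] := by
  have hm2 : at2 X 0 t ≤ mΩ := at2_le_sup (hX 0).comap_le (hX t).comap_le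
  have hmf : window X t 1 ≤ mΩ := window_le hX t 1
  have hm' : at2 X 0 t ⊔ window X t 1 ≤ mΩ := sup_le hm2 hmf
  have hAΩ : MeasurableSet A := meas_mono (window_le hX 0 t) hA
  set p : Set (Set Ω) :=
    {d | ∃ V W, MeasurableSet[at2 X 0 t] V ∧ MeasurableSet[window X t 1] W ∧ d = V ∩ W}
    with hpdef
  have hgen : at2 X 0 t ⊔ window X t 1 = MeasurableSpace.generateFrom p := by
    refine le_antisymm (sup_le ?_ ?_) (MeasurableSpace.generateFrom_le ?_)
    · intro V hV
      exact MeasurableSpace.measurableSet_generateFrom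
        ⟨V, Set.univ, hV, MeasurableSet.univ, (Set.inter_univ V).symm⟩
    · intro W hW
      exact MeasurableSpace.measurableSet_generateFrom
        ⟨Set.univ, W, MeasurableSet.univ, hW, (Set.univ_inter W).symm⟩
    · rintro d ⟨V, W, hV, hW, rfl⟩
      exact (meas_mono le_sup_left hV).inter (meas_mono le_sup_right hW)
  have hpi : IsPiSystem p := by
    rintro d1 ⟨V1, W1, hV1, hW1, rfl⟩ d2 ⟨V2, W2, hV2, hW2, rfl⟩ _
    refine ⟨V1 ∩ V2, W1 ∩ W2, hV1.inter hV2, hW1.inter hW2, ?_⟩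
    ext ω; simp only [Set.mem_inter_iff]; tauto
  have key : ∀ D : Set Ω, MeasurableSet[at2 X 0 t ⊔ window X t 1] D →
      ∫ ω in D, (P[ind A|at2 X 0 t]) ω ∂P = ∫ ω in D, ind A ω ∂P := by
    have main := MeasurableSpace.induction_on_inter
      (m := at2 X 0 t ⊔ window X t 1)
      (C := fun D _ => ∫ ω in D, (P[ind A|at2 X 0 t]) ω ∂P = ∫ ω in D, ind A ω ∂P)
      hgen hpi (by simp) ?_ ?_ ?_
    · exact fun D hD => main D hD
    · -- basic
      rintro d ⟨V, W, hV, hW, rfl⟩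
      have hVΩ : MeasurableSet V := meas_mono hm2 hV
      have hWΩ : MeasurableSet W := meas_mono hmf hW
      have hVp : MeasurableSet[window X 0 t] V := meas_mono (at2_le_window' ht.1) hV
      have e1 : ind (V ∩ A) = V.indicator (ind A) := by
        rw [ind, ind, Set.indicator_indicator]
      have ci : P[ind (V ∩ A)|at2 X 0 t] =ᵐ[P] ind V * P[ind A|at2 X 0 t] := by
        rw [e1, ind_mul]
        exact condExp_indicator (ind_integrable hAΩ) hV
      calc ∫ ω in V ∩ W, (P[ind A|at2 X 0 t]) ω ∂P
          = ∫ ω, ((ind V * P[ind A|at2 X 0 t]) * ind W) ω ∂P := by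
            rw [← integral_indicator (hVΩ.inter hWΩ),
              ← ind_mul (V ∩ W) (P[ind A|at2 X 0 t]), ind_inter, mul_right_comm]
        _ = ∫ ω, ((P[ind (V ∩ A)|at2 X 0 t]) * ind W) ω ∂P := by
            refine integral_congr_ae ?_
            filter_upwards [ci] with ω hω
            simp only [Pi.mul_apply] at hω ⊢
            rw [hω]
        _ = ∫ ω, ind ((V ∩ A) ∩ W) ω ∂P :=
            key_integral hX hP ht (hVp.inter hA) hW
        _ = ∫ ω in V ∩ W, ind A ω ∂P := by
            have hset : (V ∩ A) ∩ W = (V ∩ W) ∩ A := by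
              ext ω; simp only [Set.mem_inter_iff]; tauto
            rw [hset, ind_inter, ind_mul, integral_indicator (hVΩ.inter hWΩ)]
    · -- compl
      intro D hD hCD
      have hDΩ : MeasurableSet D := meas_mono hm' hD
      have h1 := integral_add_compl hDΩ (integrable_condExp : Integrable (P[ind A|at2 X 0 t]) P)
      have h2 := integral_add_compl hDΩ (ind_integrable hAΩ : Integrable (ind A) P)
      have h3 : ∫ ω, (P[ind A|at2 X 0 t]) ω ∂P = ∫ ω, ind A ω ∂P := integral_condExp hm2
      linarith
    · -- union
      intro f hdisj hmeas hC
      rw [integral_iUnion (fun i => meas_mono hm' (hmeas i)) hdisj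
          integrable_condExp.integrableOn,
        integral_iUnion (fun i => meas_mono hm' (hmeas i)) hdisj
          (ind_integrable hAΩ).integrableOn]
      exact tsum_congr hC
  exact (ae_eq_condExp_of_forall_setIntegral_eq hm' (ind_integrable hAΩ)
    (fun s _ _ => integrable_condExp.integrableOn) (fun D hD _ => key D hD)
    (((stronglyMeasurable_condExp (μ := P) (f := ind A) (m := at2 X 0 t)).mono
      (le_sup_left : at2 X 0 t ≤ at2 X 0 t ⊔ window X t 1)).aestronglyMeasurable)).symm

end BridgeAux

/-- bridges of a Markov measure are Markov: for `A` past and `B` future,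
`P(A ∩ B | X_0, X_t, X_1) = P(A | X_0, X_t) P(B | X_0, X_t, X_1)` a.s., and consequently past
and future are conditionally independent given `σ(X_0, X_t, X_1)`. -/
theorem bridges_of_markov_are_markov
    [MeasurableSpace Ω] [MeasurableSpace 𝒳]
    (X : ℝ → Ω → 𝒳) (hX : ∀ t, Measurable (X t))
    (P : Measure Ω) [IsProbabilityMeasure P] (hP : IsMarkov X P) :
    ∀ t ∈ Set.Icc (0:ℝ) 1, ∀ A B : Set Ω,
      MeasurableSet[window X 0 t] A → MeasurableSet[window X t 1] B →
      (P[ind (A ∩ B) | at3 X t] =ᵐ[P] P[ind A | at2 X 0 t] * P[ind B | at3 X t]) ∧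
      (P[ind (A ∩ B) | at3 X t] =ᵐ[P] P[ind A | at3 X t] * P[ind B | at3 X t]) := by
  intro t ht A B hA hB
  have hm2 := at2_le_sup (s := 0) (u := t) (X := X) (hX 0).comap_le (hX t).comap_le
  have hmf := window_le hX t 1
  have hm' := sup_le hm2 hmf
  have hm3 := at3_le_sup (t := t) (X := X) (hX 0).comap_le (hX t).comap_le (hX 1).comap_le
  have h3le' : at3 X t ≤ at2 X 0 t ⊔ window X t 1 :=
    at3_le_sup (at1_le_at2'.trans le_sup_left) (at1_le_at2.trans le_sup_left)
      ((at1_le_window ⟨ht.2, le_refl 1⟩).trans le_sup_right)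
  have hAΩ : MeasurableSet A := meas_mono (window_le hX 0 t) hA
  have hBΩ : MeasurableSet B := meas_mono (window_le hX t 1) hB
  have hABΩ : MeasurableSet (A ∩ B) := hAΩ.inter hBΩ
  have goal1 : (P[ind A|at2 X 0 t]) * (P[ind B|at3 X t]) =ᵐ[P] P[ind (A ∩ B)|at3 X t] := by
    have hprod : Integrable ((P[ind A|at2 X 0 t]) * (P[ind B|at3 X t])) P :=
      integrable_bddae_mul integrable_condExp
        (stronglyMeasurable_condExp.mono hm2).aestronglyMeasurable
        (condexp_ind_bound P (at2 X 0 t) A)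
    refine ae_eq_condExp_of_forall_setIntegral_eq hm3 (ind_integrable hABΩ)
      (fun s _ _ => hprod.integrableOn) (fun G hG _ => ?_)
      (((stronglyMeasurable_condExp.mono at2_le_at3).mul
        stronglyMeasurable_condExp).aestronglyMeasurable)
    have hGΩ : MeasurableSet G := meas_mono hm3 hG
    have hGB : MeasurableSet[at2 X 0 t ⊔ window X t 1] (G ∩ B) :=
      (meas_mono h3le' hG).inter (meas_mono le_sup_right hB)
    have hsm : StronglyMeasurable[at3 X t] (ind G * P[ind A|at2 X 0 t]) :=
      (ind_stronglyMeasurable hG).mul (stronglyMeasurable_condExp.mono at2_le_at3)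
    have hint : Integrable ((ind G * P[ind A|at2 X 0 t]) * ind B) P := by
      refine integrable_bddae_mul (ind_integrable hBΩ) ?_ ?_
      · exact ((ind_stronglyMeasurable hGΩ).mul
          (stronglyMeasurable_condExp.mono hm2)).aestronglyMeasurable
      · filter_upwards [condexp_ind_bound P (at2 X 0 t) A] with ω hω
        rw [Pi.mul_apply, norm_mul]
        nlinarith [ind_norm_le G ω, norm_nonneg (ind G ω),
          norm_nonneg ((P[ind A|at2 X 0 t]) ω)]
    have hpull : P[(ind G * P[ind A|at2 X 0 t]) * ind B|at3 X t] =ᵐ[P]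
        (ind G * P[ind A|at2 X 0 t]) * P[ind B|at3 X t] :=
      condExp_mul_of_stronglyMeasurable_left hsm hint (ind_integrable hBΩ)
    calc ∫ ω in G, ((P[ind A|at2 X 0 t]) * (P[ind B|at3 X t])) ω ∂P
        = ∫ ω, ((ind G * P[ind A|at2 X 0 t]) * P[ind B|at3 X t]) ω ∂P := by
          rw [← integral_indicator hGΩ,
            ← ind_mul G ((P[ind A|at2 X 0 t]) * (P[ind B|at3 X t])), ← mul_assoc]
      _ = ∫ ω, ((ind G * P[ind A|at2 X 0 t]) * ind B) ω ∂P := by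
          have e := integral_congr_ae hpull
          rw [← e, integral_condExp hm3]
      _ = ∫ ω, ((P[ind A|at2 X 0 t]) * ind (G ∩ B)) ω ∂P := by
          refine integral_congr_ae (Filter.Eventually.of_forall fun ω => ?_)
          simp only [Pi.mul_apply, ind_inter G B]
          ring
      _ = ∫ ω in G ∩ B, (P[ind A|at2 X 0 t]) ω ∂P := by
          rw [mul_comm, ind_mul, integral_indicator (hGΩ.inter hBΩ)]
      _ = ∫ ω in G ∩ B, (P[ind A|at2 X 0 t ⊔ window X t 1]) ω ∂P := by
          refine integral_congr_ae (ae_restrict_of_ae ?_)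
          filter_upwards [condexp_past_sup hX hP ht hA] with ω hω
          exact hω.symm
      _ = ∫ ω in G ∩ B, ind A ω ∂P := setIntegral_condExp hm' (ind_integrable hAΩ) hGB
      _ = ∫ ω in G, ind (A ∩ B) ω ∂P := by
          rw [← integral_indicator (hGΩ.inter hBΩ), ← ind_mul (G ∩ B) (ind A),
            ← ind_inter, ← integral_indicator hGΩ, ← ind_mul G (ind (A ∩ B)), ← ind_inter]
          have hset : (G ∩ B) ∩ A = G ∩ (A ∩ B) := by
            ext ω; simp only [Set.mem_inter_iff]; tauto
          rw [hset]
  have heq3 : P[ind A|at3 X t] =ᵐ[P] P[ind A|at2 X 0 t] := by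
    have t1 : P[ind A|at3 X t] =ᵐ[P] P[P[ind A|at2 X 0 t ⊔ window X t 1]|at3 X t] :=
      (condExp_condExp_of_le h3le' hm').symm
    have t2 : P[P[ind A|at2 X 0 t ⊔ window X t 1]|at3 X t] =ᵐ[P]
        P[P[ind A|at2 X 0 t]|at3 X t] :=
      condExp_congr_ae (condexp_past_sup hX hP ht hA)
    have t3 : P[P[ind A|at2 X 0 t]|at3 X t] = P[ind A|at2 X 0 t] :=
      condExp_of_stronglyMeasurable hm3
        (stronglyMeasurable_condExp.mono at2_le_at3) integrable_condExp
    exact t1.trans (t2.trans (by rw [t3]))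
  refine ⟨goal1.symm, goal1.symm.trans ?_⟩
  filter_upwards [heq3] with ω hω
  simp only [Pi.mul_apply]
  rw [hω]
end
end

section
/- A probability measure P on path space is reciprocal if and only if it is a Markov field in time: for all 0 ≤ s ≤ u ≤ 1 and all events B ∈ 𝒜_{[s,u]}, P(B | 𝒜_{[0,s]} ∨ 𝒜_{[u,1]}) = P(B | X_s, X_u), P-a.s. -/
open MeasureTheory

noncomputable section

variable {Ω 𝒳 : Type*}

section Aux

variable [MeasurableSpace Ω] [MeasurableSpace 𝒳]

lemma window_le_ambient (X : ℝ → Ω → 𝒳) (hX : ∀ t, Measurable (X t)) (s u : ℝ) :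
    window X s u ≤ ‹MeasurableSpace Ω› :=
  iSup₂_le fun r _ => (hX r).comap_le

lemma comap_le_window (X : ℝ → Ω → 𝒳) {a b r : ℝ} (hr : r ∈ Set.Icc a b) :
    MeasurableSpace.comap (X r) inferInstance ≤ window X a b :=
  le_biSup (fun t => MeasurableSpace.comap (X t) inferInstance) hr

lemma at2_le_sup_s11 (X : ℝ → Ω → 𝒳) {s u : ℝ} (h0 : 0 ≤ s) (h1 : u ≤ 1) :
    at2 X s u ≤ window X 0 s ⊔ window X u 1 := by
  rw [at2, ← measurable_iff_comap_le]
  have hs : Measurable[window X 0 s ⊔ window X u 1] (X s) := by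
    rw [measurable_iff_comap_le]
    exact le_trans (comap_le_window X (Set.mem_Icc.mpr ⟨h0, le_rfl⟩)) le_sup_left
  have hu : Measurable[window X 0 s ⊔ window X u 1] (X u) := by
    rw [measurable_iff_comap_le]
    exact le_trans (comap_le_window X (Set.mem_Icc.mpr ⟨le_rfl, h1⟩)) le_sup_right
  exact hs.prodMk hu

lemma ind_mul_eq (A : Set Ω) (h : Ω → ℝ) : ind A * h = A.indicator h := by
  ext ω; by_cases hω : ω ∈ A <;> simp [ind, hω]

lemma mul_ind_eq (A : Set Ω) (h : Ω → ℝ) : h * ind A = A.indicator h := by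
  rw [mul_comm, ind_mul_eq]

lemma ind_inter_eq (A B : Set Ω) : ind (A ∩ B) = ind A * ind B := by
  rw [ind_mul_eq]
  simp only [ind, Set.indicator_indicator]

lemma integrable_ind {P : Measure Ω} [IsFiniteMeasure P] {A : Set Ω} (hA : MeasurableSet A) :
    Integrable (ind A) P :=
  (integrable_const (1 : ℝ)).indicator hA

lemma sm_ind {m : MeasurableSpace Ω} {A : Set Ω} (hA : MeasurableSet[m] A) :
    StronglyMeasurable[m] (ind A) :=
  (stronglyMeasurable_const : StronglyMeasurable[m] fun _ : Ω => (1 : ℝ)).indicator hA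

end Aux

/-- a probability measure is reciprocal if and only if it is a Markov field in
time: conditioning inside events on all the outside data reduces to conditioning on the
boundary pair `(X_s, X_u)`. -/
theorem reciprocal_iff_markov_field
    [MeasurableSpace Ω] [MeasurableSpace 𝒳]
    (X : ℝ → Ω → 𝒳) (hX : ∀ t, Measurable (X t))
    (P : Measure Ω) [IsProbabilityMeasure P] :
    IsReciprocal X P ↔
      ∀ s u : ℝ, 0 ≤ s → s ≤ u → u ≤ 1 → ∀ B : Set Ω, MeasurableSet[window X s u] B →
        P[ind B | window X 0 s ⊔ window X u 1] =ᵐ[P] P[ind B | at2 X s u] := by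
  have hwin : ∀ a b : ℝ, window X a b ≤ ‹MeasurableSpace Ω› :=
    fun a b => window_le_ambient X hX a b
  constructor
  · -- reciprocal → Markov field
    intro hrec s u h0 hsu h1 B hB
    have h𝒢 : window X 0 s ⊔ window X u 1 ≤ ‹MeasurableSpace Ω› :=
      sup_le (hwin 0 s) (hwin u 1)
    have hℱ𝒢 : at2 X s u ≤ window X 0 s ⊔ window X u 1 := at2_le_sup_s11 X h0 h1
    have hℱ : at2 X s u ≤ ‹MeasurableSpace Ω› := hℱ𝒢.trans h𝒢
    have hBamb : MeasurableSet B := hwin s u _ hB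
    have hintB : Integrable (ind B) P := integrable_ind hBamb
    refine (ae_eq_condExp_of_forall_setIntegral_eq h𝒢 hintB
      (fun D _ _ => integrable_condExp.integrableOn)
      (fun D hD _ => ?_)
      ((stronglyMeasurable_condExp.mono hℱ𝒢).aestronglyMeasurable)).symm
    -- reduce to the π-system of rectangles A ∩ C
    have h_eq : (window X 0 s ⊔ window X u 1) = MeasurableSpace.generateFrom
        {D | ∃ A C : Set Ω,
          MeasurableSet[window X 0 s] A ∧ MeasurableSet[window X u 1] C ∧ D = A ∩ C} := by
      apply le_antisymm
      · refine sup_le ?_ ?_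
        · intro A hA
          exact MeasurableSpace.measurableSet_generateFrom
            ⟨A, Set.univ, hA, MeasurableSet.univ, (Set.inter_univ A).symm⟩
        · intro C hC
          exact MeasurableSpace.measurableSet_generateFrom
            ⟨Set.univ, C, MeasurableSet.univ, hC, (Set.univ_inter C).symm⟩
      · refine MeasurableSpace.generateFrom_le ?_
        rintro D ⟨A, C, hA, hC, rfl⟩
        exact ((le_sup_left : window X 0 s ≤ _) _ hA).inter
          ((le_sup_right : window X u 1 ≤ _) _ hC)
    have hpi : IsPiSystem {D : Set Ω | ∃ A C : Set Ω,
        MeasurableSet[window X 0 s] A ∧ MeasurableSet[window X u 1] C ∧ D = A ∩ C} := by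
      rintro D1 ⟨A1, C1, hA1, hC1, rfl⟩ D2 ⟨A2, C2, hA2, hC2, rfl⟩ -
      exact ⟨A1 ∩ A2, C1 ∩ C2, hA1.inter hA2, hC1.inter hC2,
        (Set.inter_inter_inter_comm A1 C1 A2 C2)⟩
    refine MeasurableSpace.induction_on_inter (m := window X 0 s ⊔ window X u 1)
      (C := fun D _ => ∫ x in D, (P[ind B|at2 X s u]) x ∂P = ∫ x in D, ind B x ∂P)
      h_eq hpi ?_ ?_ ?_ ?_ D hD
    · simp
    · -- rectangles
      rintro D ⟨A, C, hA, hC, rfl⟩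
      have hACm : MeasurableSet (A ∩ C) := (hwin 0 s _ hA).inter (hwin u 1 _ hC)
      have hintAC : Integrable (ind (A ∩ C)) P := integrable_ind hACm
      have hrec' := hrec s u h0 hsu h1 A B C hA hB hC
      have hmul : Integrable ((P[ind B|at2 X s u]) * ind (A ∩ C)) P := by
        rw [mul_ind_eq]; exact integrable_condExp.indicator hACm
      have hindeq : (A ∩ C).indicator (ind B) = ind (A ∩ B ∩ C) := by
        simp only [ind, Set.indicator_indicator, Set.inter_right_comm]
      calc ∫ x in A ∩ C, (P[ind B|at2 X s u]) x ∂P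
          = ∫ x, ((A ∩ C).indicator (P[ind B|at2 X s u])) x ∂P :=
            (integral_indicator hACm).symm
        _ = ∫ x, ((P[ind B|at2 X s u]) * ind (A ∩ C)) x ∂P := by rw [mul_ind_eq]
        _ = ∫ x, (P[(P[ind B|at2 X s u]) * ind (A ∩ C)|at2 X s u]) x ∂P :=
            (integral_condExp hℱ).symm
        _ = ∫ x, ((P[ind B|at2 X s u]) * P[ind (A ∩ C)|at2 X s u]) x ∂P :=
            integral_congr_ae
              (condExp_mul_of_stronglyMeasurable_left stronglyMeasurable_condExp hmul hintAC)
        _ = ∫ x, ((P[ind (A ∩ C)|at2 X s u]) * P[ind B|at2 X s u]) x ∂P := by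
            rw [mul_comm]
        _ = ∫ x, (P[ind (A ∩ B ∩ C)|at2 X s u]) x ∂P :=
            (integral_congr_ae hrec').symm
        _ = ∫ x, ind (A ∩ B ∩ C) x ∂P := integral_condExp hℱ
        _ = ∫ x, ((A ∩ C).indicator (ind B)) x ∂P := by rw [hindeq]
        _ = ∫ x in A ∩ C, ind B x ∂P := integral_indicator hACm
    · -- complements
      intro D hDm hDint
      rw [setIntegral_compl (h𝒢 _ hDm) integrable_condExp,
        setIntegral_compl (h𝒢 _ hDm) hintB, hDint, integral_condExp hℱ]
    · -- countable disjoint unions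
      intro f hdisj hmeas hCf
      rw [integral_iUnion (fun i => h𝒢 _ (hmeas i)) hdisj integrable_condExp.integrableOn,
        integral_iUnion (fun i => h𝒢 _ (hmeas i)) hdisj hintB.integrableOn]
      exact tsum_congr hCf
  · -- Markov field → reciprocal
    intro hmf s u h0 hsu h1 A B C hA hB hC
    have h𝒢 : window X 0 s ⊔ window X u 1 ≤ ‹MeasurableSpace Ω› :=
      sup_le (hwin 0 s) (hwin u 1)
    have hℱ𝒢 : at2 X s u ≤ window X 0 s ⊔ window X u 1 := at2_le_sup_s11 X h0 h1
    have hℱ : at2 X s u ≤ ‹MeasurableSpace Ω› := hℱ𝒢.trans h𝒢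
    have key := hmf s u h0 hsu h1 B hB
    have hACG : MeasurableSet[window X 0 s ⊔ window X u 1] (A ∩ C) :=
      ((le_sup_left : window X 0 s ≤ _) _ hA).inter
        ((le_sup_right : window X u 1 ≤ _) _ hC)
    have hACamb : MeasurableSet (A ∩ C) := h𝒢 _ hACG
    have hBamb : MeasurableSet B := hwin s u _ hB
    have hintB : Integrable (ind B) P := integrable_ind hBamb
    have hintAC : Integrable (ind (A ∩ C)) P := integrable_ind hACamb
    have hABCeq : ind (A ∩ B ∩ C) = ind (A ∩ C) * ind B := by
      rw [ind_mul_eq]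
      simp only [ind, Set.indicator_indicator, Set.inter_right_comm]
    have hintABC : Integrable (ind (A ∩ B ∩ C)) P :=
      integrable_ind (((hwin 0 s _ hA).inter hBamb).inter (hwin u 1 _ hC))
    have hmul2 : Integrable ((P[ind B|at2 X s u]) * ind (A ∩ C)) P := by
      rw [mul_ind_eq]; exact integrable_condExp.indicator hACamb
    have inner : P[ind (A ∩ B ∩ C)|window X 0 s ⊔ window X u 1] =ᵐ[P]
        (P[ind B|at2 X s u]) * ind (A ∩ C) := by
      have h1 : P[ind (A ∩ B ∩ C)|window X 0 s ⊔ window X u 1] =ᵐ[P]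
          ind (A ∩ C) * P[ind B|window X 0 s ⊔ window X u 1] := by
        rw [hABCeq]
        exact condExp_mul_of_stronglyMeasurable_left (sm_ind hACG)
          (by rw [← hABCeq]; exact hintABC) hintB
      refine h1.trans ?_
      filter_upwards [key] with ω hω
      simp only [Pi.mul_apply, hω, mul_comm]
    rw [mul_comm (P[ind (A ∩ C)|at2 X s u]) (P[ind B|at2 X s u])]
    calc P[ind (A ∩ B ∩ C)|at2 X s u]
        =ᵐ[P] P[(P[ind (A ∩ B ∩ C)|window X 0 s ⊔ window X u 1])|at2 X s u] :=
          (condExp_condExp_of_le hℱ𝒢 h𝒢).symm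
      _ =ᵐ[P] P[(P[ind B|at2 X s u]) * ind (A ∩ C)|at2 X s u] :=
          condExp_congr_ae inner
      _ =ᵐ[P] (P[ind B|at2 X s u]) * P[ind (A ∩ C)|at2 X s u] :=
          condExp_mul_of_stronglyMeasurable_left stronglyMeasurable_condExp hmul2 hintAC
end
end
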